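/- Let 0 < a < 4/3 and p ∈ [1, 3) with 3 − 1/p > 0. There is a constant C(ε, p) such that for all ξ > 1: ∫_0^∞ ⟨εξ₁⟩^{−4} |ξ₁|^{−1/3} / (12ε²r(ξ₁)² + |ξ₁|^{2/3}(ε²ξ₁² + 2)) dξ₁ ≤ C(ε,p)·⟨ξ⟩^{−(3 − 1/p)}, where r(ξ₁) satisfies |r(ξ₁)| ≳_ε |ξ|^{4/3} uniformly in ξ₁. -/
import Mathlib


open MeasureTheory Set

private lemma h_integrable (ε : ℝ) (hε : 0 < ε) :
    IntegrableOn (fun x : ℝ => (1 + (ε * x) ^ 2) ^ (-(2 : ℝ)) * x ^ (-(1 : ℝ) / 3))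
      (Ioi (0 : ℝ)) := by
  set h : ℝ → ℝ := fun x => (1 + (ε * x) ^ 2) ^ (-(2 : ℝ)) * x ^ (-(1 : ℝ) / 3) with hh
  have hmeas : Measurable h := by
    unfold h; fun_prop
  have hI1 : IntegrableOn h (Ioc (0 : ℝ) 1) := by
    have hg : IntegrableOn (fun x : ℝ => x ^ (-(1 : ℝ) / 3)) (Ioc (0 : ℝ) 1) := by
      have := intervalIntegral.intervalIntegrable_rpow' (a := 0) (b := 1)
        (r := -(1 : ℝ) / 3) (by norm_num)
      exact (intervalIntegrable_iff_integrableOn_Ioc_of_le (by norm_num)).mp this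
    refine hg.mono' (hmeas.aestronglyMeasurable.restrict) ?_
    filter_upwards [ae_restrict_mem measurableSet_Ioc] with x hx
    have hx0 : 0 < x := hx.1
    have h1 : (0 : ℝ) ≤ (1 + (ε * x) ^ 2) ^ (-(2 : ℝ)) :=
      Real.rpow_nonneg (by positivity) _
    have h2 : (1 + (ε * x) ^ 2) ^ (-(2 : ℝ)) ≤ 1 :=
      Real.rpow_le_one_of_one_le_of_nonpos (by nlinarith [sq_nonneg (ε * x)]) (by norm_num)
    have h3 : (0 : ℝ) ≤ x ^ (-(1 : ℝ) / 3) := Real.rpow_nonneg hx0.le _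
    rw [Real.norm_eq_abs, abs_of_nonneg (mul_nonneg h1 h3)]
    calc (1 + (ε * x) ^ 2) ^ (-(2 : ℝ)) * x ^ (-(1 : ℝ) / 3)
        ≤ 1 * x ^ (-(1 : ℝ) / 3) := mul_le_mul_of_nonneg_right h2 h3
      _ = x ^ (-(1 : ℝ) / 3) := one_mul _
  have hI2 : IntegrableOn h (Ioi (1 : ℝ)) := by
    have hg : IntegrableOn (fun x : ℝ => (ε ^ 4)⁻¹ * x ^ (-(4 : ℝ))) (Ioi (1 : ℝ)) :=
      (integrableOn_Ioi_rpow_of_lt (by norm_num) one_pos).const_mul _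
    refine hg.mono' (hmeas.aestronglyMeasurable.restrict) ?_
    filter_upwards [ae_restrict_mem measurableSet_Ioi] with x hx
    have hx1 : (1 : ℝ) < x := hx
    have hx0 : (0 : ℝ) < x := lt_trans one_pos hx1
    have h1 : (0 : ℝ) < 1 + (ε * x) ^ 2 := by positivity
    have e1 : (1 + (ε * x) ^ 2) ^ (-(2 : ℝ)) = ((1 + (ε * x) ^ 2) ^ (2 : ℕ))⁻¹ := by
      rw [Real.rpow_neg h1.le, ← Real.rpow_natCast (1 + (ε * x) ^ 2) 2]; norm_num
    have e2 : x ^ (-(4 : ℝ)) = (x ^ (4 : ℕ))⁻¹ := by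
      rw [Real.rpow_neg hx0.le, ← Real.rpow_natCast x 4]; norm_num
    have h3 : x ^ (-(1 : ℝ) / 3) ≤ 1 :=
      Real.rpow_le_one_of_one_le_of_nonpos hx1.le (by norm_num)
    have h3' : (0 : ℝ) ≤ x ^ (-(1 : ℝ) / 3) := Real.rpow_nonneg hx0.le _
    have h4 : ((1 + (ε * x) ^ 2) ^ (2 : ℕ))⁻¹ ≤ (ε ^ 4)⁻¹ * (x ^ (4 : ℕ))⁻¹ := by
      rw [← mul_inv]
      apply inv_anti₀ (by positivity)
      nlinarith [sq_nonneg (ε * x), sq_nonneg x, sq_nonneg ε, hε.le, hx0.le,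
        sq_nonneg (1 + (ε*x)^2), mul_pos hε hx0]
    have hnn : (0 : ℝ) ≤ h x := mul_nonneg (Real.rpow_nonneg h1.le _) h3'
    rw [Real.norm_eq_abs, abs_of_nonneg hnn]
    calc h x = (1 + (ε * x) ^ 2) ^ (-(2 : ℝ)) * x ^ (-(1 : ℝ) / 3) := rfl
      _ ≤ (1 + (ε * x) ^ 2) ^ (-(2 : ℝ)) * 1 :=
          mul_le_mul_of_nonneg_left h3 (Real.rpow_nonneg h1.le _)
      _ = ((1 + (ε * x) ^ 2) ^ (2 : ℕ))⁻¹ := by rw [mul_one, e1]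
      _ ≤ (ε ^ 4)⁻¹ * (x ^ (4 : ℕ))⁻¹ := h4
      _ = (ε ^ 4)⁻¹ * x ^ (-(4 : ℝ)) := by rw [e2]
  have : IntegrableOn h (Ioc (0:ℝ) 1 ∪ Ioi 1) := hI1.union hI2
  rwa [Set.Ioc_union_Ioi_eq_Ioi (by norm_num : (0:ℝ) ≤ 1)] at this

/-- The `ξ₁`-integral decays like `⟨ξ⟩^{-(3-1/p)}`, given the uniform lower
bound `|r(ξ₁)| ≳ ξ^{4/3}`. -/
theorem xi1_integral_decay (ε a p c₀ : ℝ) (hε : 0 < ε) (ha0 : 0 < a) (ha1 : a < 4 / 3)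
    (hp1 : 1 ≤ p) (hp3 : p < 3) (hc₀ : 0 < c₀) :
    ∃ C > 0, ∀ ξ : ℝ, 1 < ξ → ∀ r : ℝ → ℝ,
      (∀ ξ₁ : ℝ, c₀ * ξ ^ ((4 : ℝ) / 3) ≤ |r ξ₁|) →
      (∫ ξ₁ in Set.Ioi (0 : ℝ),
          Real.sqrt (1 + (ε * ξ₁) ^ 2) ^ (-(4 : ℝ)) * ξ₁ ^ (-(1 : ℝ) / 3) /
            (12 * ε ^ 2 * (r ξ₁) ^ 2 + ξ₁ ^ ((2 : ℝ) / 3) * (ε ^ 2 * ξ₁ ^ 2 + 2)))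
        ≤ C * Real.sqrt (1 + ξ ^ 2) ^ (-(3 - 1 / p)) := by
  set s : ℝ := 3 - 1 / p with hs
  have hp0 : 0 < p := lt_of_lt_of_le one_pos hp1
  have hs_pos : 0 < s := by
    have : 1 / p ≤ 1 := by
      rw [div_le_one hp0]; exact hp1
    simp only [hs]; linarith
  have hs83 : s ≤ 8 / 3 := by
    have : 1 / 3 < 1 / p := by
      apply one_div_lt_one_div_of_lt hp0 hp3
    simp only [hs]; linarith
  set h : ℝ → ℝ := fun x => (1 + (ε * x) ^ 2) ^ (-(2 : ℝ)) * x ^ (-(1 : ℝ) / 3) with hh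
  have hInt : IntegrableOn h (Ioi (0 : ℝ)) := h_integrable ε hε
  set K : ℝ := ∫ x in Ioi (0 : ℝ), h x with hK
  have hK0 : 0 ≤ K := by
    apply setIntegral_nonneg measurableSet_Ioi
    intro x hx
    exact mul_nonneg (Real.rpow_nonneg (by positivity) _)
      (Real.rpow_nonneg (le_of_lt hx) _)
  refine ⟨K / (12 * ε ^ 2 * c₀ ^ 2) * 2 ^ (s / 2) + 1, by positivity, ?_⟩
  intro ξ hξ r hr
  have hξ0 : (0 : ℝ) < ξ := lt_trans one_pos hξ
  set m : ℝ := Real.sqrt (1 + ξ ^ 2) with hm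
  have hm0 : 0 < m := Real.sqrt_pos.mpr (by positivity)
  have hms : 0 < m ^ (-s) := Real.rpow_pos_of_pos hm0 _
  -- the denominator lower bound
  have hD0 : (0 : ℝ) < 12 * ε ^ 2 * c₀ ^ 2 * ξ ^ ((8 : ℝ) / 3) := by positivity
  set D₀ : ℝ := 12 * ε ^ 2 * c₀ ^ 2 * ξ ^ ((8 : ℝ) / 3) with hD₀
  have hrsq : ∀ x : ℝ, c₀ ^ 2 * ξ ^ ((8 : ℝ) / 3) ≤ (r x) ^ 2 := by
    intro x
    have h1 := hr x
    have h2 : (c₀ * ξ ^ ((4 : ℝ) / 3)) ^ 2 ≤ |r x| ^ 2 := by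
      apply pow_le_pow_left₀ (by positivity) h1
    have h3 : (ξ ^ ((4 : ℝ) / 3)) ^ 2 = ξ ^ ((8 : ℝ) / 3) := by
      rw [← Real.rpow_natCast (ξ ^ ((4:ℝ)/3)) 2, ← Real.rpow_mul hξ0.le]
      norm_num
    rw [sq_abs] at h2
    calc c₀ ^ 2 * ξ ^ ((8:ℝ)/3) = (c₀ * ξ ^ ((4:ℝ)/3)) ^ 2 := by rw [mul_pow, h3]
      _ ≤ (r x) ^ 2 := h2
  -- pointwise bound and integral comparison
  have hbound : (∫ ξ₁ in Set.Ioi (0 : ℝ),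
      Real.sqrt (1 + (ε * ξ₁) ^ 2) ^ (-(4 : ℝ)) * ξ₁ ^ (-(1 : ℝ) / 3) /
        (12 * ε ^ 2 * (r ξ₁) ^ 2 + ξ₁ ^ ((2 : ℝ) / 3) * (ε ^ 2 * ξ₁ ^ 2 + 2)))
      ≤ ∫ ξ₁ in Set.Ioi (0 : ℝ), D₀⁻¹ * h ξ₁ := by
    apply integral_mono_of_nonneg
    · filter_upwards [ae_restrict_mem measurableSet_Ioi] with x hx
      have hx0 : (0 : ℝ) < x := hx
      have hden : 0 < 12 * ε ^ 2 * (r x) ^ 2 + x ^ ((2 : ℝ) / 3) * (ε ^ 2 * x ^ 2 + 2) := by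
        have h1 := hrsq x
        have h2 : 0 ≤ x ^ ((2:ℝ)/3) * (ε ^ 2 * x ^ 2 + 2) := by positivity
        nlinarith [hD0]
      have hnum : 0 ≤ Real.sqrt (1 + (ε * x) ^ 2) ^ (-(4 : ℝ)) * x ^ (-(1 : ℝ) / 3) :=
        mul_nonneg (Real.rpow_nonneg (Real.sqrt_nonneg _) _) (Real.rpow_nonneg hx0.le _)
      positivity
    · exact hInt.const_mul _
    · filter_upwards [ae_restrict_mem measurableSet_Ioi] with x hx
      have hx0 : (0 : ℝ) < x := hx
      have hsq : Real.sqrt (1 + (ε * x) ^ 2) ^ (-(4 : ℝ)) = (1 + (ε * x) ^ 2) ^ (-(2 : ℝ)) := by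
        rw [Real.sqrt_eq_rpow, ← Real.rpow_mul (by positivity)]
        norm_num
      have hnum : 0 ≤ Real.sqrt (1 + (ε * x) ^ 2) ^ (-(4 : ℝ)) * x ^ (-(1 : ℝ) / 3) :=
        mul_nonneg (Real.rpow_nonneg (Real.sqrt_nonneg _) _) (Real.rpow_nonneg hx0.le _)
      have hDle : D₀ ≤ 12 * ε ^ 2 * (r x) ^ 2 + x ^ ((2 : ℝ) / 3) * (ε ^ 2 * x ^ 2 + 2) := by
        have h1 := hrsq x
        have h2 : 0 ≤ x ^ ((2:ℝ)/3) * (ε ^ 2 * x ^ 2 + 2) := by positivity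
        have h3 : 12 * ε ^ 2 * (c₀ ^ 2 * ξ ^ ((8:ℝ)/3)) ≤ 12 * ε ^ 2 * (r x) ^ 2 := by
          apply mul_le_mul_of_nonneg_left h1 (by positivity)
        simp only [hD₀]; nlinarith
      calc Real.sqrt (1 + (ε * x) ^ 2) ^ (-(4 : ℝ)) * x ^ (-(1 : ℝ) / 3) /
            (12 * ε ^ 2 * (r x) ^ 2 + x ^ ((2 : ℝ) / 3) * (ε ^ 2 * x ^ 2 + 2))
          ≤ Real.sqrt (1 + (ε * x) ^ 2) ^ (-(4 : ℝ)) * x ^ (-(1 : ℝ) / 3) / D₀ :=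
            div_le_div_of_nonneg_left hnum hD0 hDle
        _ = D₀⁻¹ * h x := by rw [hsq]; simp only [hh]; ring
  have hint_eq : (∫ ξ₁ in Set.Ioi (0 : ℝ), D₀⁻¹ * h ξ₁) = D₀⁻¹ * K := by
    rw [hK, integral_const_mul]
  -- key decay inequality
  have hkey : (ξ ^ ((8 : ℝ) / 3))⁻¹ ≤ 2 ^ (s / 2) * m ^ (-s) := by
    have hm2 : m ≤ Real.sqrt 2 * ξ := by
      have h0 : Real.sqrt (1 + ξ ^ 2) ≤ Real.sqrt (2 * ξ ^ 2) :=
        Real.sqrt_le_sqrt (by nlinarith)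
      rwa [Real.sqrt_mul (by norm_num : (0:ℝ) ≤ 2), Real.sqrt_sq hξ0.le] at h0
    have h1 : m ^ s ≤ (Real.sqrt 2 * ξ) ^ s :=
      Real.rpow_le_rpow hm0.le hm2 hs_pos.le
    have h2 : (Real.sqrt 2 * ξ) ^ s = 2 ^ (s / 2) * ξ ^ s := by
      rw [Real.mul_rpow (Real.sqrt_nonneg _) hξ0.le, Real.sqrt_eq_rpow,
        ← Real.rpow_mul (by norm_num : (0:ℝ) ≤ 2)]
      ring_nf
    have h3 : ξ ^ s ≤ ξ ^ ((8 : ℝ) / 3) :=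
      Real.rpow_le_rpow_of_exponent_le hξ.le hs83
    have h4 : m ^ s ≤ 2 ^ (s / 2) * ξ ^ ((8 : ℝ) / 3) := by
      calc m ^ s ≤ 2 ^ (s / 2) * ξ ^ s := by rw [← h2]; exact h1
        _ ≤ 2 ^ (s / 2) * ξ ^ ((8:ℝ)/3) :=
            mul_le_mul_of_nonneg_left h3 (by positivity)
    rw [Real.rpow_neg hm0.le, ← div_eq_mul_inv, ← one_div,
      div_le_div_iff₀ (by positivity) (Real.rpow_pos_of_pos hm0 _)]
    linarith [h4]
  -- put it together
  calc (∫ ξ₁ in Set.Ioi (0 : ℝ),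
        Real.sqrt (1 + (ε * ξ₁) ^ 2) ^ (-(4 : ℝ)) * ξ₁ ^ (-(1 : ℝ) / 3) /
          (12 * ε ^ 2 * (r ξ₁) ^ 2 + ξ₁ ^ ((2 : ℝ) / 3) * (ε ^ 2 * ξ₁ ^ 2 + 2)))
      ≤ D₀⁻¹ * K := by rw [← hint_eq]; exact hbound
    _ = K / (12 * ε ^ 2 * c₀ ^ 2) * (ξ ^ ((8:ℝ)/3))⁻¹ := by
        rw [hD₀]; field_simp
    _ ≤ K / (12 * ε ^ 2 * c₀ ^ 2) * (2 ^ (s / 2) * m ^ (-s)) := by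
        apply mul_le_mul_of_nonneg_left hkey (by positivity)
    _ = K / (12 * ε ^ 2 * c₀ ^ 2) * 2 ^ (s / 2) * m ^ (-s) := by ring
    _ ≤ (K / (12 * ε ^ 2 * c₀ ^ 2) * 2 ^ (s / 2) + 1) * m ^ (-s) := by
        apply mul_le_mul_of_nonneg_right (by linarith) hms.le
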